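/- Let R and n be natural numbers with R > 1, and suppose n ≤ N, where N = 3^k if R = 3k, N = 4·3^{k-1} if R = 3k+1 (with k ≥ 1), and N = 2·3^k if R = 3k+2. Then there exist a natural number p and real matrices X_1, …, X_p of size n × n such that the entrywise (Hadamard) product X_1 ∘ X_2 ∘ ⋯ ∘ X_p equals the n × n identity matrix, the rank r_i of each X_i satisfies r_i ∈ {2,3}, and the ranks sum to at most R, i.e. ∑_{i=1}^p r_i ≤ R. -/

import Mathlib

open Matrix BigOperators

namespace HadamardAux

noncomputable def indMat {n m : ℕ} (f : Fin n → Fin m) : Matrix (Fin n) (Fin m) ℝ :=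
  Matrix.of fun i v => if f i = v then 1 else 0

lemma eqMat_eq {n m : ℕ} (f : Fin n → Fin m) :
    (Matrix.of fun i j => if f i = f j then (1:ℝ) else 0) = indMat f * (indMat f)ᵀ := by
  ext i j
  simp [indMat, Matrix.mul_apply, Matrix.transpose_apply, ite_mul, eq_comm]

lemma rank_eqMat {n m : ℕ} (f : Fin n → Fin m) (hf : Function.Surjective f) :
    (Matrix.of fun i j => if f i = f j then (1:ℝ) else 0).rank = m := by
  rw [eqMat_eq, Matrix.rank_self_mul_transpose, ← Matrix.rank_transpose_mul_self]
  have hdiag : (indMat f)ᵀ * indMat f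
      = Matrix.diagonal (fun v => ((Finset.univ.filter fun i => f i = v).card : ℝ)) := by
    ext v w
    by_cases hvw : v = w
    · subst hvw
      simp only [indMat, Matrix.mul_apply, Matrix.transpose_apply, Matrix.of_apply,
        Matrix.diagonal_apply_eq]
      rw [Finset.sum_congr rfl (g := fun i => if f i = v then (1:ℝ) else 0)
        (fun i _ => by by_cases h : f i = v <;> simp [h])]
      rw [Finset.sum_boole]
    · simp only [indMat, Matrix.mul_apply, Matrix.transpose_apply, Matrix.of_apply,
        Matrix.diagonal_apply_ne _ hvw]
      apply Finset.sum_eq_zero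
      intro i _
      by_cases h1 : f i = v <;> by_cases h2 : f i = w <;> simp_all
  rw [hdiag, Matrix.rank_diagonal]
  have hall : ∀ v : Fin m, ((Finset.univ.filter fun i => f i = v).card : ℝ) ≠ 0 := by
    intro v
    obtain ⟨i, hi⟩ := hf v
    have : i ∈ Finset.univ.filter fun i => f i = v := by simp [hi]
    have hpos : 0 < (Finset.univ.filter fun i => f i = v).card := Finset.card_pos.mpr ⟨i, this⟩
    exact Nat.cast_ne_zero.mpr hpos.ne'
  rw [Fintype.card_congr (Equiv.subtypeUnivEquiv hall)]
  simp

lemma conj_apply {n m : ℕ} (A : Matrix (Fin m) (Fin m) ℝ) (h : Fin n → Fin m) :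
    indMat h * A * (indMat h)ᵀ = Matrix.of fun i j => A (h i) (h j) := by
  ext i j
  simp [indMat, Matrix.mul_apply, Matrix.transpose_apply, Finset.sum_ite_eq,
    ite_mul, mul_ite, Finset.sum_ite_eq']

lemma rank_comp {n m : ℕ} (A : Matrix (Fin m) (Fin m) ℝ) (h : Fin n → Fin m)
    (hs : Function.Surjective h) :
    (Matrix.of fun i j => A (h i) (h j)).rank = A.rank := by
  apply le_antisymm
  · rw [← conj_apply]
    calc (indMat h * A * (indMat h)ᵀ).rank ≤ (indMat h * A).rank :=
          Matrix.rank_mul_le_left _ _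
      _ ≤ A.rank := Matrix.rank_mul_le_right _ _
  · set Y := Matrix.of fun i j => A (h i) (h j) with hY
    set s := Function.surjInv hs with hsdef
    have hA : A = Matrix.of fun a b => Y (s a) (s b) := by
      ext a b
      simp [hY, hsdef, Function.surjInv_eq hs]
    rw [hA, ← conj_apply]
    calc (indMat s * Y * (indMat s)ᵀ).rank ≤ (indMat s * Y).rank :=
          Matrix.rank_mul_le_left _ _
      _ ≤ Y.rank := Matrix.rank_mul_le_right _ _


lemma step {n n' m R' : ℕ} (hm2 : m = 2 ∨ m = 3) (hmn : m ≤ n)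
    (hn' : n' = (n - 1) / m + 1) (hn1 : 1 ≤ n)
    (IH : ∃ (p : ℕ) (X : Fin p → Matrix (Fin n') (Fin n') ℝ),
      (Matrix.of fun i j => ∏ l, X l i j) = (1 : Matrix (Fin n') (Fin n') ℝ) ∧
      (∀ l, (X l).rank = 2 ∨ (X l).rank = 3) ∧
      (∑ l, (X l).rank) ≤ R') :
    ∃ (p : ℕ) (X : Fin p → Matrix (Fin n) (Fin n) ℝ),
      (Matrix.of fun i j => ∏ l, X l i j) = (1 : Matrix (Fin n) (Fin n) ℝ) ∧
      (∀ l, (X l).rank = 2 ∨ (X l).rank = 3) ∧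
      (∑ l, (X l).rank) ≤ R' + m := by
  obtain ⟨p, X', h1, h2, h3⟩ := IH
  have hm0 : 0 < m := by omega
  set f : Fin n → Fin m := fun i => ⟨i.1 % m, Nat.mod_lt _ hm0⟩ with hf
  have hdiv : ∀ i : Fin n, i.1 / m < n' := by
    intro i
    have h1' : i.1 ≤ n - 1 := by omega
    have := Nat.div_le_div_right (c := m) h1'
    omega
  set h : Fin n → Fin n' := fun i => ⟨i.1 / m, hdiv i⟩ with hh
  have hfsurj : Function.Surjective f := by
    intro v
    refine ⟨⟨v.1, lt_of_lt_of_le v.2 hmn⟩, ?_⟩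
    simp [hf, Nat.mod_eq_of_lt v.2]
  have hhsurj : Function.Surjective h := by
    intro a
    have ha : a.1 ≤ (n - 1) / m := by omega
    have hle : a.1 * m ≤ n - 1 := (Nat.le_div_iff_mul_le hm0).mp ha
    refine ⟨⟨a.1 * m, by omega⟩, ?_⟩
    simp [hh, Nat.mul_div_cancel _ hm0]
  set Y0 : Matrix (Fin n) (Fin n) ℝ :=
    Matrix.of fun i j => if f i = f j then (1:ℝ) else 0 with hY0
  refine ⟨p + 1, Fin.cases Y0 (fun l => Matrix.of fun i j => X' l (h i) (h j)), ?_, ?_, ?_⟩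
  · ext i j
    simp only [Matrix.of_apply, Fin.prod_univ_succ, Fin.cases_zero, Fin.cases_succ]
    have hent : ∏ l, X' l (h i) (h j) = (1 : Matrix (Fin n') (Fin n') ℝ) (h i) (h j) := by
      have := congrFun (congrFun h1 (h i)) (h j)
      simpa using this
    rw [hent]
    by_cases hij : i = j
    · subst hij
      simp [hY0, Matrix.one_apply]
    · have hne : ¬(f i = f j ∧ h i = h j) := by
        rintro ⟨hfij, hhij⟩
        apply hij
        have e1 : i.1 % m = j.1 % m := by
          simpa [hf] using congrArg Fin.val hfij
        have e2 : i.1 / m = j.1 / m := by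
          simpa [hh] using congrArg Fin.val hhij
        have d1 := Nat.div_add_mod i.1 m
        have d2 := Nat.div_add_mod j.1 m
        have e3 : m * (i.1 / m) = m * (j.1 / m) := by rw [e2]
        exact Fin.ext (by omega)
      rw [Matrix.one_apply_ne hij]
      by_cases hc1 : f i = f j
      · have hc2 : h i ≠ h j := fun hc => hne ⟨hc1, hc⟩
        simp [hY0, Matrix.one_apply_ne hc2]
      · simp [hY0, hc1]
  · intro l
    refine Fin.cases ?_ ?_ l
    · simp only [Fin.cases_zero]
      rw [hY0, rank_eqMat f hfsurj]
      omega
    · intro l'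
      simp only [Fin.cases_succ]
      rw [rank_comp _ h hhsurj]
      exact h2 l'
  · rw [Fin.sum_univ_succ]
    simp only [Fin.cases_zero, Fin.cases_succ]
    have e0 : Y0.rank = m := by rw [hY0, rank_eqMat f hfsurj]
    have e1 : ∀ l : Fin p, (Matrix.of fun i j => X' l (h i) (h j)).rank = (X' l).rank :=
      fun l => rank_comp _ h hhsurj
    rw [e0, Finset.sum_congr rfl (fun l _ => e1 l)]
    omega


lemma pow_ge_two {k : ℕ} (h : 2 ≤ 3 ^ k) : 1 ≤ k := by
  rcases k with _ | k
  · norm_num at h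
  · omega

lemma one_le_pow3 (k : ℕ) : 1 ≤ 3 ^ k := Nat.one_le_pow _ _ (by norm_num)

lemma main_aux : ∀ n : ℕ, ∀ R : ℕ, 1 < R →
    ((∃ k : ℕ, R = 3 * k ∧ n ≤ 3 ^ k) ∨
     (∃ k : ℕ, 1 ≤ k ∧ R = 3 * k + 1 ∧ n ≤ 4 * 3 ^ (k - 1)) ∨
     (∃ k : ℕ, R = 3 * k + 2 ∧ n ≤ 2 * 3 ^ k)) →
    ∃ (p : ℕ) (X : Fin p → Matrix (Fin n) (Fin n) ℝ),
      (Matrix.of fun i j => ∏ l, X l i j) = (1 : Matrix (Fin n) (Fin n) ℝ) ∧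
      (∀ l, (X l).rank = 2 ∨ (X l).rank = 3) ∧
      (∑ l, (X l).rank) ≤ R := by
  intro n
  induction n using Nat.strong_induction_on with
  | _ n IH =>
    intro R hR hn
    by_cases hsmall : n ≤ 1
    · refine ⟨0, Fin.elim0, ?_, fun l => l.elim0, by simp⟩
      ext i j
      have hij : i = j := Fin.ext (by have := i.isLt; have := j.isLt; omega)
      subst hij
      simp [Matrix.one_apply]
    by_cases h23 : n ≤ 3
    · have hRn : n ≤ R := by
        by_cases h3 : n ≤ 2
        · omega
        · rcases hn with ⟨k, hk, hnk⟩ | ⟨k, hk1, hk, hnk⟩ | ⟨k, hk, hnk⟩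
          · have := pow_ge_two (k := k) (by omega)
            omega
          · omega
          · have := pow_ge_two (k := k) (by have := one_le_pow3 k; omega)
            omega
      refine ⟨1, fun _ => 1, ?_, ?_, ?_⟩
      · ext i j; simp
      · intro l
        rw [Matrix.rank_one]
        simp only [Fintype.card_fin]
        omega
      · simp only [Fin.sum_univ_one, Matrix.rank_one, Fintype.card_fin]
        exact hRn
    · have h4 : 4 ≤ n := by omega
      rcases hn with ⟨k, hk, hnk⟩ | ⟨k, hk1, hk, hnk⟩ | ⟨k, hk, hnk⟩
      · -- R = 3k, n ≤ 3^k ; take m = 3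
        rcases k with _ | k'
        · simp at hnk; omega
        · have ha : 1 ≤ 3 ^ k' := one_le_pow3 k'
          have hpow3 : (3:ℕ) ^ (k' + 1) = 3 ^ k' * 3 := pow_succ 3 k'
          have hn'le : (n - 1) / 3 + 1 ≤ 3 ^ k' := by omega
          have hn'lt : (n - 1) / 3 + 1 < n := by omega
          have hn'2 : 2 ≤ (n - 1) / 3 + 1 := by omega
          have hk'1 : 1 ≤ k' := pow_ge_two (by omega)
          have IHres := IH _ hn'lt (3 * k') (by omega) (Or.inl ⟨k', rfl, hn'le⟩)
          obtain ⟨p, X, hx1, hx2, hx3⟩ :=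
            step (n := n) (Or.inr rfl) (by omega) rfl (by omega) IHres
          exact ⟨p, X, hx1, hx2, by omega⟩
      · -- R = 3k+1, k ≥ 1, n ≤ 4·3^(k-1) ; take m = 2
        obtain ⟨k', rfl⟩ : ∃ k', k = k' + 1 := ⟨k - 1, by omega⟩
        simp only [Nat.add_sub_cancel] at hnk
        have ha : 1 ≤ 3 ^ k' := one_le_pow3 k'
        have hn'le : (n - 1) / 2 + 1 ≤ 2 * 3 ^ k' := by omega
        have hn'lt : (n - 1) / 2 + 1 < n := by omega
        have IHres := IH _ hn'lt (3 * k' + 2) (by omega)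
          (Or.inr (Or.inr ⟨k', rfl, hn'le⟩))
        obtain ⟨p, X, hx1, hx2, hx3⟩ :=
          step (n := n) (Or.inl rfl) (by omega) rfl (by omega) IHres
        exact ⟨p, X, hx1, hx2, by omega⟩
      · -- R = 3k+2, n ≤ 2·3^k ; take m = 2
        have ha : 1 ≤ 3 ^ k := one_le_pow3 k
        have hn'le : (n - 1) / 2 + 1 ≤ 3 ^ k := by omega
        have hn'lt : (n - 1) / 2 + 1 < n := by omega
        have hn'2 : 2 ≤ (n - 1) / 2 + 1 := by omega
        have hk1 : 1 ≤ k := pow_ge_two (by omega)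
        have IHres := IH _ hn'lt (3 * k) (by omega) (Or.inl ⟨k, rfl, hn'le⟩)
        obtain ⟨p, X, hx1, hx2, hx3⟩ :=
          step (n := n) (Or.inl rfl) (by omega) rfl (by omega) IHres
        exact ⟨p, X, hx1, hx2, by omega⟩

end HadamardAux

/-- For `R > 1` and `n ≤ N` (where `N` depends on `R mod 3` as in the theorem),
the `n × n` identity matrix admits a Hadamard decomposition into matrices of rank 2 or 3
whose ranks sum to at most `R`. -/
theorem identity_hadamard_decomposition (R n : ℕ) (hR : 1 < R)
    (hn : (∃ k : ℕ, R = 3 * k ∧ n ≤ 3 ^ k) ∨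
          (∃ k : ℕ, 1 ≤ k ∧ R = 3 * k + 1 ∧ n ≤ 4 * 3 ^ (k - 1)) ∨
          (∃ k : ℕ, R = 3 * k + 2 ∧ n ≤ 2 * 3 ^ k)) :
    ∃ (p : ℕ) (X : Fin p → Matrix (Fin n) (Fin n) ℝ),
      (Matrix.of fun i j => ∏ l, X l i j) = (1 : Matrix (Fin n) (Fin n) ℝ) ∧
      (∀ l, (X l).rank = 2 ∨ (X l).rank = 3) ∧
      (∑ l, (X l).rank) ≤ R := by
  exact HadamardAux.main_aux n R hR hn
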